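/- Let d be a natural number, let g, θ : Fin d → ℝ be the gradient and current parameter vector, let η > 0 be a learning rate, and let r ≤ d. With the gradient-descent update Δ i = −η · g i, the importance score S i = −g i · Δ i − g i · θ i equals η · (g i)² − g i · θ i, and the indicator x̃ of any subset T of cardinality r satisfying S j ≤ S i for all i ∈ T, j ∉ T minimizes ΔL(x) = ∑_{i=1}^{d} g i · (x i · (−η · g i) + (1 − x i) · (−θ i)) over all binary x : Fin d → {0,1} with ∑_i x i = r. -/
import Mathlib


/-- With the gradient-descent update `Δ i = -η * g i`, the importance score
`S i = -g i * Δ i - g i * θ i` equals `η * (g i)^2 - g i * θ i`, and the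
indicator of a top-r subset by `S` minimizes the linearized objective change
over all binary vectors summing to `r`. -/
theorem pruning_gd_topr {d : ℕ} (g θ : Fin d → ℝ) (η : ℝ) (hη : 0 < η)
    (r : ℕ) (hr : r ≤ d)
    (S : Fin d → ℝ) (hS : ∀ i, S i = -(g i) * (-η * g i) - g i * θ i)
    (T : Finset (Fin d)) (hT : T.card = r)
    (htop : ∀ i ∈ T, ∀ j ∉ T, S j ≤ S i)
    (xt : Fin d → ℝ) (hxt : ∀ i, xt i = if i ∈ T then 1 else 0) :
    (∀ i, S i = η * (g i) ^ 2 - g i * θ i) ∧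
      ∀ x : Fin d → ℝ, (∀ i, x i = 0 ∨ x i = 1) → (∑ i, x i) = (r : ℝ) →
        ∑ i, g i * (xt i * (-η * g i) + (1 - xt i) * (-θ i)) ≤
          ∑ i, g i * (x i * (-η * g i) + (1 - x i) * (-θ i)) := by
  have hS' : ∀ i, S i = η * (g i) ^ 2 - g i * θ i := by
    intro i; rw [hS i]; ring
  refine ⟨hS', ?_⟩
  intro x hx hsum
  set U := Finset.univ.filter (fun i => x i = 1) with hU
  have hxU : ∀ i, x i = if i ∈ U then 1 else 0 := by
    intro i
    rcases hx i with h | h <;> simp [hU, h]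
  have hcardU : (U.card : ℝ) = r := by
    rw [← hsum, Finset.sum_congr rfl (fun i _ => hxU i)]
    simp
  have hUcard : U.card = r := by exact_mod_cast hcardU
  have hdiff : (U \ T).card = (T \ U).card := by
    have h1 := Finset.card_sdiff_add_card_inter U T
    have h2 := Finset.card_sdiff_add_card_inter T U
    rw [Finset.inter_comm] at h2
    omega
  have hsub : ∑ i ∈ U \ T, S i ≤ ∑ i ∈ T \ U, S i := by
    rcases Finset.eq_empty_or_nonempty (T \ U) with he | hne
    · have h0 : (U \ T) = ∅ := Finset.card_eq_zero.mp (by rw [hdiff, he]; simp)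
      simp [h0, he]
    · obtain ⟨i₀, hi₀, hmin⟩ := Finset.exists_min_image (T \ U) S hne
      calc ∑ i ∈ U \ T, S i ≤ (U \ T).card • S i₀ :=
            Finset.sum_le_card_nsmul _ _ _
              (fun j hj => htop i₀ (Finset.mem_sdiff.mp hi₀).1 j (Finset.mem_sdiff.mp hj).2)
        _ = (T \ U).card • S i₀ := by rw [hdiff]
        _ ≤ ∑ i ∈ T \ U, S i := Finset.card_nsmul_le_sum _ _ _ (fun i hi => hmin i hi)
  have key : ∑ i ∈ U, S i ≤ ∑ i ∈ T, S i := by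
    have h1 : ∑ i ∈ U ∩ T, S i + ∑ i ∈ U \ T, S i = ∑ i ∈ U, S i :=
      Finset.sum_inter_add_sum_sdiff _ _ _
    have h2 : ∑ i ∈ T ∩ U, S i + ∑ i ∈ T \ U, S i = ∑ i ∈ T, S i :=
      Finset.sum_inter_add_sum_sdiff _ _ _
    rw [Finset.inter_comm] at h2
    linarith
  have expand : ∀ y : Fin d → ℝ,
      ∑ i, g i * (y i * (-η * g i) + (1 - y i) * (-θ i)) =
        ∑ i, (-(g i * θ i)) - ∑ i, y i * S i := by
    intro y
    rw [← Finset.sum_sub_distrib]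
    exact Finset.sum_congr rfl (fun i _ => by rw [hS' i]; ring)
  have ind_sum : ∀ (V : Finset (Fin d)) (y : Fin d → ℝ),
      (∀ i, y i = if i ∈ V then 1 else 0) → ∑ i, y i * S i = ∑ i ∈ V, S i := by
    intro V y hy
    rw [Finset.sum_congr rfl (fun i _ => by rw [hy i])]
    simp [ite_mul]
  rw [expand xt, expand x, ind_sum T xt hxt, ind_sum U x hxU]
  linarith
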